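/- Let R = F[[π]] with F the field of 2 elements and maximal ideal p = (π). The commutator subgroup of GL(2,R) is the set of B in SL(2,R) whose reduction modulo p lies in the commutator subgroup of GL(2,F); in particular, the commutator subgroup of GL(2,R) has index 2 in SL(2,R). -/

import Mathlib

open Matrix Subgroup
open scoped commutatorElement

namespace Stmt10Aux

variable {R : Type*} [CommRing R]

set_option linter.unnecessarySeqFocus false

def E12 (x : R) : GL (Fin 2) R :=
  ⟨!![1, x; 0, 1], !![1, -x; 0, 1],
   by ext i j; fin_cases i <;> fin_cases j <;> simp [Matrix.mul_fin_two, Matrix.one_fin_two],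
   by ext i j; fin_cases i <;> fin_cases j <;> simp [Matrix.mul_fin_two, Matrix.one_fin_two]⟩

def E21 (x : R) : GL (Fin 2) R :=
  ⟨!![1, 0; x, 1], !![1, 0; -x, 1],
   by ext i j; fin_cases i <;> fin_cases j <;> simp [Matrix.mul_fin_two, Matrix.one_fin_two],
   by ext i j; fin_cases i <;> fin_cases j <;> simp [Matrix.mul_fin_two, Matrix.one_fin_two]⟩

def D1 (u : Rˣ) : GL (Fin 2) R :=
  ⟨!![u, 0; 0, 1], !![(u⁻¹ : Rˣ), 0; 0, 1],
   by ext i j; fin_cases i <;> fin_cases j <;> simp [Matrix.mul_fin_two, Matrix.one_fin_two],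
   by ext i j; fin_cases i <;> fin_cases j <;> simp [Matrix.mul_fin_two, Matrix.one_fin_two]⟩

def D2 (u : Rˣ) : GL (Fin 2) R :=
  ⟨!![1, 0; 0, u], !![1, 0; 0, (u⁻¹ : Rˣ)],
   by ext i j; fin_cases i <;> fin_cases j <;> simp [Matrix.mul_fin_two, Matrix.one_fin_two],
   by ext i j; fin_cases i <;> fin_cases j <;> simp [Matrix.mul_fin_two, Matrix.one_fin_two]⟩

def Dd (u : Rˣ) : GL (Fin 2) R :=
  ⟨!![u, 0; 0, (u⁻¹ : Rˣ)], !![(u⁻¹ : Rˣ), 0; 0, u],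
   by ext i j; fin_cases i <;> fin_cases j <;> simp [Matrix.mul_fin_two, Matrix.one_fin_two],
   by ext i j; fin_cases i <;> fin_cases j <;> simp [Matrix.mul_fin_two, Matrix.one_fin_two]⟩

def W : GL (Fin 2) R :=
  ⟨!![0, 1; 1, 0], !![0, 1; 1, 0],
   by ext i j; fin_cases i <;> fin_cases j <;> simp [Matrix.mul_fin_two, Matrix.one_fin_two],
   by ext i j; fin_cases i <;> fin_cases j <;> simp [Matrix.mul_fin_two, Matrix.one_fin_two]⟩

lemma comm_E12 (u : Rˣ) (x : R) : ⁅D1 u, E12 x⁆ = E12 ((u - 1) * x) := by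
  ext i j
  show (_ * _ * _ * _ : Matrix _ _ R) i j = _
  fin_cases i <;> fin_cases j <;>
    simp [D1, E12, Matrix.mul_fin_two, Units.inv_mk] <;> ring

lemma comm_E21 (u : Rˣ) (x : R) : ⁅D2 u, E21 x⁆ = E21 ((u - 1) * x) := by
  ext i j
  show (_ * _ * _ * _ : Matrix _ _ R) i j = _
  fin_cases i <;> fin_cases j <;>
    simp [D2, E21, Matrix.mul_fin_two, Units.inv_mk] <;> ring

lemma comm_W (u : Rˣ) : ⁅D1 u, W⁆ = Dd u := by
  ext i j
  show (_ * _ * _ * _ : Matrix _ _ R) i j = _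
  fin_cases i <;> fin_cases j <;>
    simp [D1, W, Dd, Matrix.mul_fin_two, Units.inv_mk] <;> ring

lemma mem_comm {G : Type*} [Group G] (g h : G) : ⁅g, h⁆ ∈ commutator G :=
  Subgroup.commutator_mem_commutator (Subgroup.mem_top _) (Subgroup.mem_top _)

lemma map_commutator_le {G G' : Type*} [Group G] [Group G'] (f : G →* G') :
    Subgroup.map f (commutator G) ≤ commutator G' := by
  rw [commutator_def, Subgroup.map_commutator]
  exact Subgroup.commutator_mono le_top le_top

lemma Dd_mem (u : Rˣ) : Dd u ∈ commutator (GL (Fin 2) R) := by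
  rw [← comm_W]; exact mem_comm _ _

lemma decomp (z : GL (Fin 2) R) (a : Rˣ) (ha : (a : R) = z.val 0 0)
    (hdet : z.val.det = 1) :
    z = E21 (z.val 1 0 * (a⁻¹ : Rˣ)) * Dd a * E12 ((a⁻¹ : Rˣ) * z.val 0 1) := by
  have hd : z.val 1 1 * (a : R) = z.val 1 0 * z.val 0 1 + 1 := by
    rw [Matrix.det_fin_two] at hdet
    rw [ha]; linear_combination hdet
  ext i j
  show z.val i j = (_ * _ * _ : Matrix _ _ R) i j
  fin_cases i <;> fin_cases j <;>
    simp [E12, E21, Dd, Matrix.mul_fin_two]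
  all_goals first
    | exact ha.symm
    | linear_combination ((a⁻¹ : Rˣ) : R) * hd - z.val 1 1 * a.mul_inv

section PS

variable {F : Type*} [Field F]

lemma E12_mem {y : PowerSeries F} (hy : PowerSeries.constantCoeff (R := F) y = 0) :
    E12 y ∈ commutator (GL (Fin 2) (PowerSeries F)) := by
  obtain ⟨x, hx⟩ := PowerSeries.X_dvd_iff.2 hy
  have hu : IsUnit (1 + PowerSeries.X : PowerSeries F) :=
    PowerSeries.isUnit_iff_constantCoeff.2 (by simp)
  have h : y = ((hu.unit : PowerSeries F) - 1) * x := by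
    rw [hu.unit_spec, hx]; ring
  rw [h, ← comm_E12]
  exact mem_comm _ _

lemma E21_mem {y : PowerSeries F} (hy : PowerSeries.constantCoeff (R := F) y = 0) :
    E21 y ∈ commutator (GL (Fin 2) (PowerSeries F)) := by
  obtain ⟨x, hx⟩ := PowerSeries.X_dvd_iff.2 hy
  have hu : IsUnit (1 + PowerSeries.X : PowerSeries F) :=
    PowerSeries.isUnit_iff_constantCoeff.2 (by simp)
  have h : y = ((hu.unit : PowerSeries F) - 1) * x := by
    rw [hu.unit_spec, hx]; ring
  rw [h, ← comm_E21]
  exact mem_comm _ _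

/-- the congruence subgroup lemma -/
lemma congr_mem (z : GL (Fin 2) (PowerSeries F))
    (hdet : Matrix.GeneralLinearGroup.det z = 1)
    (hred : Matrix.GeneralLinearGroup.map (PowerSeries.constantCoeff (R := F)) z = 1) :
    z ∈ commutator (GL (Fin 2) (PowerSeries F)) := by
  have hent : ∀ i j, PowerSeries.constantCoeff (R := F) (z.val i j) =
      (1 : Matrix (Fin 2) (Fin 2) F) i j := by
    intro i j
    have := congrArg (fun g : GL (Fin 2) F => g.val i j) hred
    simpa using this
  have h00 : PowerSeries.constantCoeff (R := F) (z.val 0 0) = 1 := by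
    simpa [Matrix.one_apply] using hent 0 0
  have h01 : PowerSeries.constantCoeff (R := F) (z.val 0 1) = 0 := by
    simpa [Matrix.one_apply] using hent 0 1
  have h10 : PowerSeries.constantCoeff (R := F) (z.val 1 0) = 0 := by
    simpa [Matrix.one_apply] using hent 1 0
  have hu : IsUnit (z.val 0 0) :=
    PowerSeries.isUnit_iff_constantCoeff.2 (by rw [h00]; exact isUnit_one)
  have hdet' : z.val.det = 1 := by
    have := congrArg Units.val hdet
    simpa [← Matrix.GeneralLinearGroup.val_det_apply] using this
  rw [decomp z hu.unit hu.unit_spec.symm hdet']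
  refine mul_mem (mul_mem ?_ (Dd_mem _)) ?_
  · exact E21_mem (by rw [_root_.map_mul, h10, zero_mul])
  · exact E12_mem (by rw [_root_.map_mul, h01, mul_zero])

end PS

/-! ### the permutation representation of `GL(2,F)` -/

def toPerm : GL (Fin 2) R →* Equiv.Perm (Fin 2 → R) where
  toFun g :=
    { toFun := fun v => g.val.mulVec v
      invFun := fun v => (g⁻¹).val.mulVec v
      left_inv := fun v => by
        show (g⁻¹).val.mulVec (g.val.mulVec v) = v
        rw [Matrix.mulVec_mulVec, Units.inv_mul, Matrix.one_mulVec]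
      right_inv := fun v => by
        show g.val.mulVec ((g⁻¹).val.mulVec v) = v
        rw [Matrix.mulVec_mulVec, Units.mul_inv, Matrix.one_mulVec] }
  map_one' := by ext v; simp
  map_mul' g h := by
    refine Equiv.ext fun v => ?_
    show (g * h).val.mulVec v = g.val.mulVec (h.val.mulVec v)
    rw [Units.val_mul, Matrix.mulVec_mulVec]

section GL2F

variable {F : Type*} [Field F] [Fintype F] (hF : Fintype.card F = 2)

include hF

lemma eq_zero_or_one (x : F) : x = 0 ∨ x = 1 := by
  classical
  rcases eq_or_ne x 0 with h | h
  · exact Or.inl h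
  · right
    have hcard : Fintype.card Fˣ = 1 := by
      rw [Fintype.card_units, hF]
    have hsub : Subsingleton Fˣ := Fintype.card_le_one_iff_subsingleton.1 (by omega)
    have := Subsingleton.elim ((isUnit_iff_ne_zero.2 h).unit) 1
    calc x = ((isUnit_iff_ne_zero.2 h).unit : F) := ((isUnit_iff_ne_zero.2 h).unit_spec).symm
    _ = ((1 : Fˣ) : F) := by rw [this]
    _ = 1 := rfl

lemma toPerm_W [DecidableEq (Fin 2 → F)] : toPerm (W : GL (Fin 2) F) =
    Equiv.swap (![1, 0] : Fin 2 → F) ![0, 1] := by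
  have key : ∀ v : Fin 2 → F, (W : GL (Fin 2) F).val.mulVec v = ![v 1, v 0] := by
    intro v
    funext i
    fin_cases i <;> simp [W, Matrix.mulVec, dotProduct, Fin.sum_univ_two, Matrix.vecHead, Matrix.vecTail]
  refine Equiv.ext fun v => ?_
  show (W : GL (Fin 2) F).val.mulVec v = _
  rw [key]
  have hv : v = ![v 0, v 1] := by funext i; fin_cases i <;> rfl
  rcases eq_zero_or_one hF (v 0) with h0 | h0 <;>
      rcases eq_zero_or_one hF (v 1) with h1 | h1
  · rw [Equiv.swap_apply_of_ne_of_ne]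
    · rw [hv, h0, h1]; simp
    · rw [hv, h0, h1]; intro hc; simpa using congrFun hc 0
    · rw [hv, h0, h1]; intro hc; simpa using congrFun hc 1
  · have hvb : v = ![0, 1] := by rw [hv, h0, h1]
    rw [hvb, Equiv.swap_apply_right]
    simp [h0, h1]
  · have hva : v = ![1, 0] := by rw [hv, h0, h1]
    rw [hva, Equiv.swap_apply_left]
    simp [h0, h1]
  · rw [Equiv.swap_apply_of_ne_of_ne]
    · rw [hv, h0, h1]; simp
    · rw [hv, h0, h1]; intro hc; simpa using congrFun hc 1
    · rw [hv, h0, h1]; intro hc; simpa using congrFun hc 0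

lemma index_commutator_GL2F : (commutator (GL (Fin 2) F)).index = 2 := by
  classical
  set φ : GL (Fin 2) F →* ℤˣ := Equiv.Perm.sign.comp toPerm with hφ
  have hWsign : φ W = -1 := by
    show Equiv.Perm.sign (toPerm (W : GL (Fin 2) F)) = -1
    rw [toPerm_W hF, Equiv.Perm.sign_swap]
    intro hc
    exact one_ne_zero ((congrFun hc 0))
  have hsurj : Function.Surjective φ := by
    intro u
    rcases Int.units_eq_one_or u with rfl | rfl
    · exact ⟨1, map_one φ⟩
    · exact ⟨W, hWsign⟩
  have hindex : φ.ker.index = 2 := by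
    rw [Subgroup.index_ker, MonoidHom.range_eq_top.2 hsurj, Subgroup.card_top]
    rw [Nat.card_eq_fintype_card]; rfl
  have hcardG : Nat.card (GL (Fin 2) F) = 6 := by
    rw [Matrix.card_GL_field, Fin.prod_univ_two, hF]
    norm_num
  have hcardker : Nat.card φ.ker = 3 := by
    have := Subgroup.index_mul_card φ.ker
    rw [hindex, hcardG] at this
    omega
  have hle : commutator (GL (Fin 2) F) ≤ φ.ker := Abelianization.commutator_subset_ker φ
  have hne : commutator (GL (Fin 2) F) ≠ ⊥ := by
    intro hc
    have hmem : ⁅(W : GL (Fin 2) F), E12 (1 : F)⁆ ∈ commutator (GL (Fin 2) F) :=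
      mem_comm _ _
    rw [hc, Subgroup.mem_bot] at hmem
    have : (⁅(W : GL (Fin 2) F), E12 (1 : F)⁆).val 1 0 = 1 := by
      show (_ * _ * _ * _ : Matrix _ _ F) 1 0 = 1
      simp [W, E12, Matrix.mul_fin_two]
    rw [hmem] at this
    simp [Matrix.one_apply] at this
  have hdvd : Nat.card (commutator (GL (Fin 2) F)) ∣ 3 := by
    rw [← hcardker]; exact Subgroup.card_dvd_of_le hle
  have hcard1 : Nat.card (commutator (GL (Fin 2) F)) ≠ 1 := by
    simp only [ne_eq, Subgroup.card_eq_one]; exact hne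
  have hcard3 : Nat.card (commutator (GL (Fin 2) F)) = 3 := by
    rcases (Nat.prime_three).eq_one_or_self_of_dvd _ hdvd with h | h
    · exact absurd h hcard1
    · exact h
  have : commutator (GL (Fin 2) F) = φ.ker := by
    have : Finite (GL (Fin 2) F) := Nat.finite_of_card_ne_zero (by omega)
    exact Subgroup.eq_of_le_of_card_ge hle (by rw [hcardker, hcard3])
  rw [this, hindex]

end GL2F

end Stmt10Aux

open Stmt10Aux
/-- For `R = F₂[[π]]`, the commutator subgroup of `GL(2,R)` consists of the determinant-one
matrices whose reduction mod `π` lies in the commutator subgroup of `GL(2,F₂)`;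
in particular it has index `2` in `SL(2,R)`. -/
theorem stmt10 (F : Type*) [Field F] [Fintype F] (hF : Fintype.card F = 2) :
    commutator (GL (Fin 2) (PowerSeries F)) =
      (Matrix.GeneralLinearGroup.det :
          GL (Fin 2) (PowerSeries F) →* (PowerSeries F)ˣ).ker ⊓
        Subgroup.comap
          (Matrix.GeneralLinearGroup.map (PowerSeries.constantCoeff (R := F)) :
            GL (Fin 2) (PowerSeries F) →* GL (Fin 2) F)
          (commutator (GL (Fin 2) F)) ∧
    (commutator (GL (Fin 2) (PowerSeries F))).relIndex
      (Matrix.GeneralLinearGroup.det :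
        GL (Fin 2) (PowerSeries F) →* (PowerSeries F)ˣ).ker = 2 := by
  classical
  set Δ : GL (Fin 2) (PowerSeries F) →* (PowerSeries F)ˣ :=
    Matrix.GeneralLinearGroup.det with hΔ
  set ρ : GL (Fin 2) (PowerSeries F) →* GL (Fin 2) F :=
    Matrix.GeneralLinearGroup.map (PowerSeries.constantCoeff (R := F)) with hρ
  set κ : GL (Fin 2) F →* GL (Fin 2) (PowerSeries F) :=
    Matrix.GeneralLinearGroup.map (PowerSeries.C (R := F)) with hκ
  have hκρ : ∀ g : GL (Fin 2) F, ρ (κ g) = g := by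
    intro g
    ext i j
    simp [hρ, hκ]
  have h1 : commutator (GL (Fin 2) (PowerSeries F)) =
      Δ.ker ⊓ Subgroup.comap ρ (commutator (GL (Fin 2) F)) := by
    apply le_antisymm
    · exact le_inf (Abelianization.commutator_subset_ker _)
        (Subgroup.map_le_iff_le_comap.1 (map_commutator_le ρ))
    · intro x hx
      rw [Subgroup.mem_inf] at hx
      obtain ⟨hx1, hx2⟩ := hx
      set y := κ (ρ x) with hy'
      have hy : y ∈ commutator (GL (Fin 2) (PowerSeries F)) :=
        map_commutator_le κ (Subgroup.mem_map.2 ⟨ρ x, hx2, rfl⟩)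
      have hydet : Δ y = 1 := Abelianization.commutator_subset_ker Δ hy
      have hz : y⁻¹ * x ∈ commutator (GL (Fin 2) (PowerSeries F)) := by
        apply congr_mem
        · rw [_root_.map_mul, _root_.map_inv, hydet, MonoidHom.mem_ker.1 hx1]
          simp
        · rw [_root_.map_mul, _root_.map_inv, hy', hκρ (ρ x)]
          exact inv_mul_cancel (ρ x)
      have : x = y * (y⁻¹ * x) := by group
      rw [this]
      exact mul_mem hy hz
  refine ⟨h1, ?_⟩
  have hsurj : Function.Surjective (ρ.comp Δ.ker.subtype) := by
    intro g
    have hsub : Subsingleton Fˣ := by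
      apply Fintype.card_le_one_iff_subsingleton.1
      rw [Fintype.card_units, hF]
    have hdet1 : Matrix.GeneralLinearGroup.det g = 1 := Subsingleton.elim _ _
    have hks : κ g ∈ Δ.ker := by
      rw [MonoidHom.mem_ker, hΔ, hκ, Matrix.GeneralLinearGroup.map_det, hdet1, _root_.map_one]
    exact ⟨⟨κ g, hks⟩, hκρ g⟩
  rw [h1, inf_comm, Subgroup.inf_relIndex_right, Subgroup.relIndex,
    Subgroup.subgroupOf, Subgroup.comap_comap,
    Subgroup.index_comap_of_surjective _ hsurj]
  exact index_commutator_GL2F hF
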